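/- arXiv:2604.02303 — 5 statements merged into one kernel-verified Lean document; each statement's English description precedes it below -/
import Mathlib

section
/- A pre-principal collection of subcubes of 𝔹^n is the collection of principal trapspaces of some commutative Boolean network of dimension n if and only if it is convex (meaning: for all Q, R in the collection and every subcube S with Q ⊆ S ⊆ R, S also belongs to the collection). -/
/-!  Common definitions: Boolean networks on `Fin n → Bool`. -/

/-- The update `f^{(S)}` of the coordinates in `S` according to `f`. -/
def upd {n : ℕ} (f : (Fin n → Bool) → Fin n → Bool) (S : Finset (Fin n)) :
    (Fin n → Bool) → Fin n → Bool :=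
  fun x i => if i ∈ S then f x i else x i

/-- `f^{(S,T)} = f^{(T)} ∘ f^{(S)}`. -/
def upd2 {n : ℕ} (f : (Fin n → Bool) → Fin n → Bool) (S T : Finset (Fin n)) :
    (Fin n → Bool) → Fin n → Bool :=
  upd f T ∘ upd f S

/-- `Δ(x,y)`, the set of coordinates where `x` and `y` differ. -/
def delta {n : ℕ} (x y : Fin n → Bool) : Set (Fin n) := {i | x i ≠ y i}

/-- Hamming distance. -/
noncomputable def hdist {n : ℕ} (x y : Fin n → Bool) : ℕ := (delta x y).ncard

/-- The interval (subcube) `[x,y]`. -/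
def interval {n : ℕ} (x y : Fin n → Bool) : Set (Fin n → Bool) :=
  {z | delta x z ⊆ delta x y}

/-- A subcube of `𝔹^n`: fix the coordinates in `S` to `0` and those in `T` to `1`. -/
def IsSubcube {n : ℕ} (X : Set (Fin n → Bool)) : Prop :=
  ∃ S T : Set (Fin n), Disjoint S T ∧
    X = {x | (∀ i ∈ S, x i = false) ∧ (∀ i ∈ T, x i = true)}

/-- The partial order `f ⊑ g` on Boolean networks. -/
def BNle {n : ℕ} (f g : (Fin n → Bool) → Fin n → Bool) : Prop :=
  ∀ x, delta x (f x) ⊆ delta x (g x)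

/-- A trapspace of `f`: an invariant subcube. -/
def IsTrapspace {n : ℕ} (f : (Fin n → Bool) → Fin n → Bool)
    (X : Set (Fin n → Bool)) : Prop :=
  IsSubcube X ∧ ∀ x ∈ X, f x ∈ X

/-- The collection of all trapspaces of `f`. -/
def trapspaces {n : ℕ} (f : (Fin n → Bool) → Fin n → Bool) :
    Set (Set (Fin n → Bool)) :=
  {X | IsTrapspace f X}

/-- The principal trapspace `T_f(x)`: the smallest trapspace of `f` containing `x`. -/
def Tprin {n : ℕ} (f : (Fin n → Bool) → Fin n → Bool) (x : Fin n → Bool) :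
    Set (Fin n → Bool) :=
  ⋂₀ {X | IsTrapspace f X ∧ x ∈ X}

/-- The collection of principal trapspaces of `f`. -/
def PT {n : ℕ} (f : (Fin n → Bool) → Fin n → Bool) : Set (Set (Fin n → Bool)) :=
  {X | ∃ x, X = Tprin f x}

-- The opposite of `x` in a subcube `X` containing `x`: the coordinate `i` is flipped
-- iff some element of `X` differs from `x` there; so `[x, opp X x] = X` when `X` is a
-- subcube containing `x`.
open scoped Classical in
noncomputable def opp {n : ℕ} (X : Set (Fin n → Bool)) (x : Fin n → Bool) :
    Fin n → Bool :=
  fun i => if ∃ y ∈ X, y i ≠ x i then !(x i) else x i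

/-- The trapping closure `f^T`, characterised by `[x, f^T(x)] = T_f(x)`. -/
noncomputable def trapClosure {n : ℕ} (f : (Fin n → Bool) → Fin n → Bool) :
    (Fin n → Bool) → Fin n → Bool :=
  fun x => opp (Tprin f x) x

/-- The general asynchronous graph of `f`, as a relation on `𝔹^n`. -/
def GA {n : ℕ} (f : (Fin n → Bool) → Fin n → Bool) :
    (Fin n → Bool) → (Fin n → Bool) → Prop :=
  fun x y => ∃ S : Finset (Fin n), y = upd f S x

/-- The asynchronous graph of `f`, as a relation on `𝔹^n`. -/
def Agraph {n : ℕ} (f : (Fin n → Bool) → Fin n → Bool) :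
    (Fin n → Bool) → (Fin n → Bool) → Prop :=
  fun x y => ∃ i : Fin n, y = upd f {i} x

/-- The trapping graph of `f`: an edge `(x,y)` iff `y ∈ T_f(x)`. -/
def TG {n : ℕ} (f : (Fin n → Bool) → Fin n → Bool) :
    (Fin n → Bool) → (Fin n → Bool) → Prop :=
  fun x y => y ∈ Tprin f x

/-- A network is trapping if its general asynchronous graph is transitive. -/
def IsTrapping {n : ℕ} (f : (Fin n → Bool) → Fin n → Bool) : Prop :=
  Transitive (GA f)

/-- A commutative Boolean network: `f^{(i,j)} = f^{(j,i)}` for all `i,j`. -/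
def IsCommutative' {n : ℕ} (f : (Fin n → Bool) → Fin n → Bool) : Prop :=
  ∀ i j : Fin n, upd2 f {i} {j} = upd2 f {j} {i}

/-- `𝒜(x)`: the intersection of all members of `𝒜` containing `x`
(`= 𝔹^n` if no member contains `x`, since `⋂₀ ∅ = univ`). -/
def collAt {n : ℕ} (𝒜 : Set (Set (Fin n → Bool))) (x : Fin n → Bool) :
    Set (Fin n → Bool) :=
  ⋂₀ {A ∈ 𝒜 | x ∈ A}

/-- The network `F(𝒜)`, characterised by `[x, F(𝒜)(x)] = 𝒜(x)`. -/
noncomputable def Fnet {n : ℕ} (𝒜 : Set (Set (Fin n → Bool))) :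
    (Fin n → Bool) → Fin n → Bool :=
  fun x => opp (collAt 𝒜 x) x

/-- A collection of subcubes is pre-principal if `𝒬 = {𝒬(x) : x ∈ 𝔹^n}`. -/
def PrePrincipal {n : ℕ} (𝒬 : Set (Set (Fin n → Bool))) : Prop :=
  𝒬 = {X | ∃ x, X = collAt 𝒬 x}

/-- `λ(𝒜)`: unions of subcollections of `𝒜` that are subcubes. -/
def lamColl {n : ℕ} (𝒜 : Set (Set (Fin n → Bool))) : Set (Set (Fin n → Bool)) :=
  {X | ∃ ℛ ⊆ 𝒜, X = ⋃₀ ℛ ∧ IsSubcube X}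

/-- `μ(𝒜) = {𝒜(x) : x ∈ 𝔹^n}`. -/
def muColl {n : ℕ} (𝒜 : Set (Set (Fin n → Bool))) : Set (Set (Fin n → Bool)) :=
  {X | ∃ x, X = collAt 𝒜 x}

/-- A pre-ideal collection of subcubes. -/
def PreIdeal {n : ℕ} (𝒥 : Set (Set (Fin n → Bool))) : Prop :=
  Set.univ ∈ 𝒥 ∧
  (∀ A ∈ 𝒥, ∀ B ∈ 𝒥, (A ∩ B).Nonempty → A ∩ B ∈ 𝒥) ∧
  (∀ ℛ ⊆ 𝒥, IsSubcube (⋃₀ ℛ) → ⋃₀ ℛ ∈ 𝒥)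

/-- The collection of minimal trapspaces of `f`. -/
def MT {n : ℕ} (f : (Fin n → Bool) → Fin n → Bool) : Set (Set (Fin n → Bool)) :=
  {X | IsTrapspace f X ∧ ∀ Y, IsTrapspace f Y → ¬ Y ⊂ X}

/-- `M(f)`: the union of the minimal trapspaces of `f`. -/
def Mset {n : ℕ} (f : (Fin n → Bool) → Fin n → Bool) : Set (Fin n → Bool) :=
  ⋃₀ MT f

-- The min-trapping extension `f^M`: `[x, f^M(x)] = T_f(x)` if `x ∈ M(f)`,
-- and `f^M(x) = ¬x` otherwise.
open scoped Classical in
noncomputable def minExt {n : ℕ} (f : (Fin n → Bool) → Fin n → Bool) :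
    (Fin n → Bool) → Fin n → Bool :=
  fun x => if x ∈ Mset f then opp (Tprin f x) x else fun i => !(x i)

/-! ### Auxiliary development for Statement 13 -/

namespace Stmt13Aux

variable {n : ℕ}

lemma bool_eq_of_ne_of_ne {a b c : Bool} (h1 : a ≠ c) (h2 : b ≠ c) : a = b := by
  cases a <;> cases b <;> cases c <;> simp_all

lemma bool_eq_not_of_ne {a b : Bool} (h : a ≠ b) : a = !b := by
  cases a <;> cases b <;> simp_all

/-- The subcube with base point `x` and free coordinates `F`. -/
def cube (x : Fin n → Bool) (F : Set (Fin n)) : Set (Fin n → Bool) :=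
  {z | ∀ i, z i ≠ x i → i ∈ F}

/-- The set of coordinates of `X` that are free relative to `x`. -/
def freeSet (X : Set (Fin n → Bool)) (x : Fin n → Bool) : Set (Fin n) :=
  {i | ∃ y ∈ X, y i ≠ x i}

/-- Flip coordinate `j` of `x`. -/
def flp (x : Fin n → Bool) (j : Fin n) : Fin n → Bool :=
  fun k => if k = j then !(x j) else x k

/-- The set of coordinates where `f` differs from the identity at `x`. -/
def Ds (f : (Fin n → Bool) → Fin n → Bool) (x : Fin n → Bool) : Set (Fin n) :=
  {i | f x i ≠ x i}

lemma mem_cube_self (x : Fin n → Bool) (F : Set (Fin n)) : x ∈ cube x F :=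
  fun _ h => absurd rfl h

lemma cube_mono {x : Fin n → Bool} {F G : Set (Fin n)} (h : F ⊆ G) :
    cube x F ⊆ cube x G := fun _ hz i hi => h (hz i hi)

lemma flp_self (x : Fin n → Bool) (j : Fin n) : flp x j j = !(x j) := by simp [flp]

lemma flp_ne {x : Fin n → Bool} {k j : Fin n} (h : k ≠ j) : flp x j k = x k := by
  simp [flp, h]

lemma flp_self_ne (x : Fin n → Bool) (j : Fin n) : flp x j j ≠ x j := by
  rw [flp_self]; cases x j <;> simp

lemma mem_cube_flp {x : Fin n → Bool} {F : Set (Fin n)} {j : Fin n} :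
    flp x j ∈ cube x F ↔ j ∈ F := by
  constructor
  · intro h; exact h j (flp_self_ne x j)
  · intro hj i hi
    by_cases hij : i = j
    · exact hij ▸ hj
    · exact (hi (flp_ne hij)).elim

lemma cube_subset_of_mem {x y : Fin n → Bool} {F : Set (Fin n)} (hy : y ∈ cube x F) :
    cube x F ⊆ cube y F := by
  intro z hz i hi
  by_cases h : z i = x i
  · exact hy i fun hyx => hi (h.trans hyx.symm)
  · exact hz i h

lemma cube_rebase {x y : Fin n → Bool} {F : Set (Fin n)} (hy : y ∈ cube x F) :
    cube x F = cube y F :=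
  Set.Subset.antisymm (cube_subset_of_mem hy)
    (cube_subset_of_mem (fun i hi => hy i (Ne.symm hi)))

lemma isSubcube_cube (x : Fin n → Bool) (F : Set (Fin n)) : IsSubcube (cube x F) := by
  refine ⟨{i | i ∉ F ∧ x i = false}, {i | i ∉ F ∧ x i = true}, ?_, ?_⟩
  · rw [Set.disjoint_left]
    rintro i ⟨_, hif⟩ ⟨_, hit⟩
    simp [hif] at hit
  · ext z
    constructor
    · intro hz
      refine ⟨fun i hi => ?_, fun i hi => ?_⟩
      · by_contra h
        exact hi.1 (hz i (by rw [hi.2]; exact h))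
      · by_contra h
        exact hi.1 (hz i (by rw [hi.2]; exact h))
    · rintro ⟨h1, h2⟩ i hi
      by_contra hiF
      cases hx : x i
      · exact hi ((h1 i ⟨hiF, hx⟩).trans hx.symm)
      · exact hi ((h2 i ⟨hiF, hx⟩).trans hx.symm)

lemma subcube_eq_cube {X : Set (Fin n → Bool)} (hX : IsSubcube X) {x : Fin n → Bool}
    (hx : x ∈ X) : X = cube x (freeSet X x) := by
  obtain ⟨S, T, -, rfl⟩ := hX
  apply Set.Subset.antisymm
  · intro z hz i hi; exact ⟨z, hz, hi⟩
  · intro z hz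
    refine ⟨fun i hi => ?_, fun i hi => ?_⟩
    · by_contra h
      obtain ⟨y, hy, hyne⟩ := hz i (by rw [hx.1 i hi]; exact h)
      exact hyne (by rw [hy.1 i hi, hx.1 i hi])
    · by_contra h
      obtain ⟨y, hy, hyne⟩ := hz i (by rw [hx.2 i hi]; exact h)
      exact hyne (by rw [hy.2 i hi, hx.2 i hi])

lemma freeSet_cube (x : Fin n → Bool) (F : Set (Fin n)) : freeSet (cube x F) x = F := by
  apply Set.Subset.antisymm
  · rintro i ⟨y, hy, hne⟩; exact hy i hne
  · intro i hi; exact ⟨flp x i, mem_cube_flp.2 hi, flp_self_ne x i⟩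

lemma subset_freeSet_of_cube_subset {x : Fin n → Bool} {F G : Set (Fin n)}
    (h : cube x F ⊆ cube x G) : F ⊆ G :=
  fun _ hi => mem_cube_flp.1 (h (mem_cube_flp.2 hi))

lemma sInter_eq_cube {ℱ : Set (Set (Fin n → Bool))} {x : Fin n → Bool}
    (h : ∀ A ∈ ℱ, IsSubcube A ∧ x ∈ A) :
    ⋂₀ ℱ = cube x (freeSet (⋂₀ ℱ) x) := by
  apply Set.Subset.antisymm
  · intro z hz i hi; exact ⟨z, hz, hi⟩
  · intro z hz
    rw [Set.mem_sInter]
    intro A hA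
    rw [subcube_eq_cube (h A hA).1 (h A hA).2]
    intro i hi
    obtain ⟨y, hy, hyne⟩ := hz i hi
    exact ⟨y, Set.mem_sInter.1 hy A hA, hyne⟩

lemma flp_comm {x : Fin n → Bool} {i j : Fin n} (hij : i ≠ j) :
    flp (flp x i) j = flp (flp x j) i := by
  funext k
  by_cases h1 : k = i
  · subst h1
    rw [flp_ne hij, flp_self, flp_self, flp_ne hij]
  · by_cases h2 : k = j
    · subst h2
      rw [flp_self, flp_ne (Ne.symm hij), flp_ne h1, flp_self]
    · rw [flp_ne h2, flp_ne h1, flp_ne h1, flp_ne h2]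

/-! ### Trapspace generalities -/

lemma mem_tprin (f : (Fin n → Bool) → Fin n → Bool) (x : Fin n → Bool) :
    x ∈ Tprin f x :=
  Set.mem_sInter.2 fun _ hX => hX.2

lemma tprin_subset {f : (Fin n → Bool) → Fin n → Bool} {X : Set (Fin n → Bool)}
    {x : Fin n → Bool} (hX : IsTrapspace f X) (hx : x ∈ X) : Tprin f x ⊆ X :=
  Set.sInter_subset_of_mem ⟨hX, hx⟩

lemma tprin_eq_cube (f : (Fin n → Bool) → Fin n → Bool) (x : Fin n → Bool) :
    Tprin f x = cube x (freeSet (Tprin f x) x) :=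
  sInter_eq_cube (fun _ hA => ⟨hA.1.1, hA.2⟩)

lemma isTrapspace_tprin (f : (Fin n → Bool) → Fin n → Bool) (x : Fin n → Bool) :
    IsTrapspace f (Tprin f x) := by
  constructor
  · rw [tprin_eq_cube f x]; exact isSubcube_cube _ _
  · intro z hz
    apply Set.mem_sInter.2
    intro X hX
    exact hX.1.2 z (Set.mem_sInter.1 hz X hX)

/-! ### Commutative networks -/

lemma commP {f : (Fin n → Bool) → Fin n → Bool} (h : IsCommutative' f)
    {i j : Fin n} (hij : j ≠ i) (x : Fin n → Bool) :
    f (upd f {i} x) j = f x j := by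
  have h2 := congrFun (congrFun (h i j) x) j
  simp only [upd2, Function.comp_apply] at h2
  rw [show (upd f {j} (upd f {i} x) j) = f (upd f {i} x) j from by simp [upd]] at h2
  rw [show (upd f {i} (upd f {j} x) j) = upd f {j} x j from by simp [upd, hij]] at h2
  rw [show upd f {j} x j = f x j from by simp [upd]] at h2
  exact h2

lemma comm_upd {f : (Fin n → Bool) → Fin n → Bool} (h : IsCommutative' f)
    (K : Finset (Fin n)) :
    ∀ x : Fin n → Bool, ∀ j ∉ K, f (upd f K x) j = f x j := by
  induction K using Finset.induction_on with
  | empty =>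
    intro x j _
    have he : upd f ∅ x = x := by funext k; simp [upd]
    rw [he]
  | insert a s ha ih =>
    intro x j hj
    have hcomp : upd f (insert a s) x = upd f {a} (upd f s x) := by
      funext k
      by_cases hk : k = a
      · subst hk
        simp only [upd, Finset.mem_insert_self, if_pos, Finset.mem_singleton, if_true]
        exact (ih x k ha).symm
      · by_cases hks : k ∈ s
        · simp [upd, hk, hks]
        · simp [upd, hk, hks]
    have hja : j ≠ a := fun e => hj (by rw [e]; exact Finset.mem_insert_self a s)
    rw [hcomp, commP h hja]
    exact ih x j (fun hjs => hj (Finset.mem_insert_of_mem hjs))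

lemma eq_upd_of_mem_cube {f : (Fin n → Bool) → Fin n → Bool} {x z : Fin n → Bool}
    (hz : z ∈ cube x (Ds f x)) :
    z = upd f (Finset.univ.filter fun i => z i ≠ x i) x := by
  funext k
  by_cases hk : z k = x k
  · simp [upd, hk]
  · have hzk : z k = f x k := bool_eq_of_ne_of_ne hk (hz k hk)
    have hv : upd f (Finset.univ.filter fun i => z i ≠ x i) x k = f x k := by
      simp [upd, hk]
    rw [hv]
    exact hzk

lemma tprin_comm {f : (Fin n → Bool) → Fin n → Bool} (h : IsCommutative' f)
    (x : Fin n → Bool) : Tprin f x = cube x (Ds f x) := by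
  apply Set.Subset.antisymm
  · have hinv : ∀ z ∈ cube x (Ds f x), f z ∈ cube x (Ds f x) := by
      intro z hz i hi
      by_contra hiD
      have hzK := eq_upd_of_mem_cube hz
      have hiK : i ∉ (Finset.univ.filter fun k => z k ≠ x k) := by
        simp only [Finset.mem_filter, Finset.mem_univ, true_and]
        intro hne
        exact hiD (hz i hne)
      have hfz : f z i = f x i := by
        conv_lhs => rw [hzK]
        exact comm_upd h _ x i hiK
      have hxi : f x i = x i := not_ne_iff.1 hiD
      exact hi (hfz.trans hxi)
    exact tprin_subset ⟨isSubcube_cube x _, hinv⟩ (mem_cube_self x _)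
  · conv_rhs => rw [tprin_eq_cube f x]
    apply cube_mono
    intro i hi
    exact ⟨f x, (isTrapspace_tprin f x).2 x (mem_tprin f x), hi⟩

lemma ds_flp {f : (Fin n → Bool) → Fin n → Bool} (h : IsCommutative' f)
    {p q : Fin n → Bool} {j : Fin n}
    (hp : p ∈ cube q (Ds f q)) (hj : j ∈ Ds f q) (hjp : j ∉ Ds f p) :
    Ds f (flp p j) = Ds f p ∪ {j} := by
  classical
  set K := Finset.univ.filter (fun i => p i ≠ q i) with hK
  have hpu : p = upd f K q := eq_upd_of_mem_cube hp
  have hjK : j ∈ K := by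
    by_contra hjK
    have hpj : p j = q j := by
      have : ¬ (p j ≠ q j) := by simpa [hK] using hjK
      exact not_ne_iff.1 this
    have h1 : f p j = f q j := by
      conv_lhs => rw [hpu]
      exact comm_upd h K q j hjK
    exact hjp (show f p j ≠ p j by rw [h1, hpj]; exact hj)
  have hpjval : p j = f q j := by
    conv_lhs => rw [hpu]
    simp [upd, hjK]
  have hfq : f q j = !(q j) := bool_eq_not_of_ne hj
  have hflp : flp p j = upd f (K.erase j) q := by
    funext k
    by_cases hkj : k = j
    · subst hkj
      have h2 : upd f (K.erase k) q k = q k := by simp [upd]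
      rw [flp_self, h2, hpjval, hfq, Bool.not_not]
    · by_cases hkK : k ∈ K
      · have h2 : upd f (K.erase j) q k = f q k := by simp [upd, Finset.mem_erase, hkj, hkK]
        have h3 : p k = f q k := by
          conv_lhs => rw [hpu]
          simp [upd, hkK]
        rw [flp_ne hkj, h2]; exact h3
      · have h2 : upd f (K.erase j) q k = q k := by simp [upd, Finset.mem_erase, hkj, hkK]
        have h3 : p k = q k := by
          conv_lhs => rw [hpu]
          simp [upd, hkK]
        rw [flp_ne hkj, h2]; exact h3
  have hfqflp : f (flp p j) j = f q j := by
    rw [hflp]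
    exact comm_upd h _ q j (Finset.notMem_erase j K)
  have hjD' : j ∈ Ds f (flp p j) := by
    show f (flp p j) j ≠ flp p j j
    rw [hfqflp, flp_self, hpjval, hfq, Bool.not_not]
    cases q j <;> simp
  have hpb : p = upd f ({j} : Finset (Fin n)) (flp p j) := by
    funext k
    by_cases hkj : k = j
    · subst hkj
      have h2 : upd f ({k} : Finset (Fin n)) (flp p k) k = f (flp p k) k := by simp [upd]
      rw [h2, hfqflp, hpjval]
    · simp [upd, hkj, flp_ne hkj]
  have hoff : ∀ k, k ≠ j → f p k = f (flp p j) k := by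
    intro k hk
    conv_lhs => rw [hpb]
    exact commP h hk (flp p j)
  ext k
  by_cases hkj : k = j
  · subst hkj
    constructor
    · intro _; exact Or.inr rfl
    · intro _; exact hjD'
  · have hpk : flp p j k = p k := flp_ne hkj
    constructor
    · intro hD
      left
      show f p k ≠ p k
      rw [hoff k hkj, ← hpk]
      exact hD
    · rintro (hD | hjj)
      · show f (flp p j) k ≠ flp p j k
        rw [← hoff k hkj, hpk]
        exact hD
      · exact absurd (Set.mem_singleton_iff.1 hjj) hkj

lemma fwd {f : (Fin n → Bool) → Fin n → Bool} (h : IsCommutative' f)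
    {S : Set (Fin n → Bool)} (hS : IsSubcube S) {q : Fin n → Bool}
    (hSR : S ⊆ cube q (Ds f q)) :
    ∀ (m : ℕ) (p : Fin n → Bool), p ∈ S → Ds f p ⊆ freeSet S p →
      (freeSet S p \ Ds f p).ncard ≤ m → ∃ z, S = Tprin f z := by
  have done : ∀ p : Fin n → Bool, p ∈ S → freeSet S p = Ds f p → S = Tprin f p := by
    intro p hpS heq
    rw [tprin_comm h p, ← heq]
    conv_lhs => rw [subcube_eq_cube hS hpS]
  intro m
  induction m with
  | zero =>
    intro p hpS hsub hcard
    refine ⟨p, done p hpS ?_⟩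
    have hemp : freeSet S p \ Ds f p = ∅ :=
      (Set.ncard_eq_zero (Set.toFinite _)).1 (Nat.le_zero.1 hcard)
    apply Set.Subset.antisymm _ hsub
    intro i hi
    by_contra hiD
    exact (Set.eq_empty_iff_forall_notMem.1 hemp i) ⟨hi, hiD⟩
  | succ m ih =>
    intro p hpS hsub hcard
    by_cases hFD : freeSet S p ⊆ Ds f p
    · exact ⟨p, done p hpS (Set.Subset.antisymm hFD hsub)⟩
    · obtain ⟨j, hjF, hjD⟩ := Set.not_subset.1 hFD
      have hScube : S = cube p (freeSet S p) := subcube_eq_cube hS hpS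
      have hp'S : flp p j ∈ S := by rw [hScube]; exact mem_cube_flp.2 hjF
      have hpq : p ∈ cube q (Ds f q) := hSR hpS
      have hp'q : flp p j ∈ cube q (Ds f q) := hSR hp'S
      have hjq : j ∈ Ds f q := by
        by_cases hpj : p j = q j
        · apply hp'q j
          rw [flp_self, hpj]
          cases q j <;> simp
        · exact hpq j hpj
      have hDnew : Ds f (flp p j) = Ds f p ∪ {j} := ds_flp h hpq hjq hjD
      have hmemp' : flp p j ∈ cube p (freeSet S p) := by rw [← hScube]; exact hp'S
      have h1 : S = cube (flp p j) (freeSet S p) := by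
        conv_lhs => rw [hScube]
        exact cube_rebase hmemp'
      have hFnew : freeSet S (flp p j) = freeSet S p :=
        calc freeSet S (flp p j)
            = freeSet (cube (flp p j) (freeSet S p)) (flp p j) := by rw [← h1]
          _ = freeSet S p := freeSet_cube _ _
      have hsub' : Ds f (flp p j) ⊆ freeSet S (flp p j) := by
        rw [hDnew, hFnew]
        apply Set.union_subset hsub
        intro k hk
        rw [Set.mem_singleton_iff.1 hk]
        exact hjF
      have hmeas : freeSet S (flp p j) \ Ds f (flp p j) = (freeSet S p \ Ds f p) \ {j} := by
        rw [hDnew, hFnew, ← Set.diff_diff]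
      have hlt : ((freeSet S p \ Ds f p) \ {j}).ncard ≤ m := by
        have hjmem : j ∈ (freeSet S p \ Ds f p) := ⟨hjF, hjD⟩
        have hlt2 := Set.ncard_diff_singleton_lt_of_mem hjmem (Set.toFinite _)
        omega
      exact ih (flp p j) hp'S hsub' (by rw [hmeas]; exact hlt)

end Stmt13Aux

open Stmt13Aux

/-- a pre-principal collection of subcubes is the collection of
principal trapspaces of some commutative network iff it is convex. -/
theorem stmt13 (n : ℕ) (𝒬 : Set (Set (Fin n → Bool)))
    (h𝒬 : ∀ A ∈ 𝒬, IsSubcube A) (hpp : PrePrincipal 𝒬) :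
    (∃ f : (Fin n → Bool) → Fin n → Bool, IsCommutative' f ∧ PT f = 𝒬) ↔
      (∀ Q ∈ 𝒬, ∀ R ∈ 𝒬, ∀ S : Set (Fin n → Bool),
        IsSubcube S → Q ⊆ S → S ⊆ R → S ∈ 𝒬) := by
  constructor
  · -- Forward: a commutative realisation forces convexity.
    rintro ⟨f, hcomm, rfl⟩
    intro Q hQ R hR S hS hQS hSR
    obtain ⟨p, rfl⟩ := hQ
    obtain ⟨q, rfl⟩ := hR
    have hpS : p ∈ S := hQS (mem_tprin f p)
    have hSR' : S ⊆ cube q (Ds f q) := by rw [← tprin_comm hcomm q]; exact hSR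
    have hsub : Ds f p ⊆ freeSet S p := by
      intro i hi
      have h1 : flp p i ∈ S := hQS (by rw [tprin_comm hcomm p]; exact mem_cube_flp.2 hi)
      rw [subcube_eq_cube hS hpS] at h1
      exact mem_cube_flp.1 h1
    exact fwd hcomm hS hSR' _ p hpS hsub le_rfl
  · -- Backward: build the commutative network `Fnet 𝒬`.
    intro hconv
    have hCmem : ∀ x, collAt 𝒬 x ∈ 𝒬 := fun x => (Set.ext_iff.1 hpp (collAt 𝒬 x)).2 ⟨x, rfl⟩
    have hxC : ∀ x, x ∈ collAt 𝒬 x := fun x => Set.mem_sInter.2 fun _ hA => hA.2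
    have hCcube : ∀ x, collAt 𝒬 x = cube x (freeSet (collAt 𝒬 x) x) := fun x =>
      sInter_eq_cube (fun A hA => ⟨h𝒬 A hA.1, hA.2⟩)
    have hCsub : ∀ {x : Fin n → Bool} {A}, A ∈ 𝒬 → x ∈ A → collAt 𝒬 x ⊆ A :=
      fun hA hx => Set.sInter_subset_of_mem ⟨hA, hx⟩
    have hCmono : ∀ {x y : Fin n → Bool}, y ∈ collAt 𝒬 x → collAt 𝒬 y ⊆ collAt 𝒬 x :=
      fun {x y} hy => hCsub (hCmem x) hy
    have hflipC : ∀ (x : Fin n → Bool) i,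
        flp x i ∈ collAt 𝒬 x ↔ i ∈ freeSet (collAt 𝒬 x) x := by
      intro x i
      constructor
      · intro hmem; exact ⟨flp x i, hmem, flp_self_ne x i⟩
      · intro hi; rw [hCcube x]; exact mem_cube_flp.2 hi
    have hFpos : ∀ (x : Fin n → Bool) i, i ∈ freeSet (collAt 𝒬 x) x →
        Fnet 𝒬 x i = !(x i) := by
      intro x i hi
      show opp (collAt 𝒬 x) x i = !(x i)
      rw [opp]
      exact if_pos hi
    have hFneg : ∀ (x : Fin n → Bool) i, i ∉ freeSet (collAt 𝒬 x) x →
        Fnet 𝒬 x i = x i := by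
      intro x i hi
      show opp (collAt 𝒬 x) x i = x i
      rw [opp]
      exact if_neg hi
    have hupd_pos : ∀ (x : Fin n → Bool) i, flp x i ∈ collAt 𝒬 x →
        upd (Fnet 𝒬) {i} x = flp x i := by
      intro x i hmem
      funext k
      by_cases hk : k = i
      · subst hk
        have hv : Fnet 𝒬 x k = !(x k) := hFpos x k ((hflipC x k).1 hmem)
        simp [upd, hv, flp_self]
      · simp [upd, hk, flp_ne hk]
    have hupd_neg : ∀ (x : Fin n → Bool) i, flp x i ∉ collAt 𝒬 x →
        upd (Fnet 𝒬) {i} x = x := by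
      intro x i hmem
      funext k
      by_cases hk : k = i
      · subst hk
        have hv : Fnet 𝒬 x k = x k := hFneg x k (fun hi => hmem ((hflipC x k).2 hi))
        simp [upd, hv]
      · simp [upd, hk]
    -- the key convexity claim
    have hclaim : ∀ (x : Fin n → Bool) (i j : Fin n), i ≠ j →
        flp x i ∈ collAt 𝒬 x → flp x j ∈ collAt 𝒬 x →
        flp (flp x i) j ∈ collAt 𝒬 (flp x i) := by
      intro x i j hij hxi hxj
      have hQR : collAt 𝒬 (flp x i) ⊆ collAt 𝒬 x := hCmono hxi
      have hiFR : i ∈ freeSet (collAt 𝒬 x) x := (hflipC x i).1 hxi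
      have hjFR : j ∈ freeSet (collAt 𝒬 x) x := (hflipC x j).1 hxj
      have hRc' : collAt 𝒬 x = cube (flp x i) (freeSet (collAt 𝒬 x) x) := by
        conv_lhs => rw [hCcube x]
        exact cube_rebase (by rw [← hCcube x]; exact hxi)
      have hFQFR : freeSet (collAt 𝒬 (flp x i)) (flp x i) ⊆ freeSet (collAt 𝒬 x) x := by
        apply subset_freeSet_of_cube_subset (x := flp x i)
        rw [← hCcube (flp x i), ← hRc']
        exact hQR
      have hQB : collAt 𝒬 (flp x i) ⊆ cube (flp x i)
          (freeSet (collAt 𝒬 (flp x i)) (flp x i) ∪ (freeSet (collAt 𝒬 x) x \ {j})) := by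
        conv_lhs => rw [hCcube (flp x i)]
        exact cube_mono Set.subset_union_left
      have hBR : cube (flp x i)
          (freeSet (collAt 𝒬 (flp x i)) (flp x i) ∪ (freeSet (collAt 𝒬 x) x \ {j})) ⊆
          collAt 𝒬 x := by
        conv_rhs => rw [hRc']
        apply cube_mono
        intro k hk
        rcases hk with hk | hk
        · exact hFQFR hk
        · exact hk.1
      have hBQ : cube (flp x i)
          (freeSet (collAt 𝒬 (flp x i)) (flp x i) ∪ (freeSet (collAt 𝒬 x) x \ {j})) ∈ 𝒬 :=
        hconv _ (hCmem (flp x i)) _ (hCmem x) _ (isSubcube_cube _ _) hQB hBR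
      have hxB : x ∈ cube (flp x i)
          (freeSet (collAt 𝒬 (flp x i)) (flp x i) ∪ (freeSet (collAt 𝒬 x) x \ {j})) := by
        intro k hk
        have hki : k = i := by
          by_contra hki
          exact hk (flp_ne hki).symm
        subst hki
        exact Or.inr ⟨hiFR, fun hmem => hij (Set.mem_singleton_iff.1 hmem)⟩
      have hRB : collAt 𝒬 x ⊆ cube (flp x i)
          (freeSet (collAt 𝒬 (flp x i)) (flp x i) ∪ (freeSet (collAt 𝒬 x) x \ {j})) :=
        hCsub hBQ hxB
      have hxjB := hRB hxj
      have hne : flp x j j ≠ flp x i j := by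
        rw [flp_self, flp_ne (Ne.symm hij)]
        cases x j <;> simp
      have hjFQ : j ∈ freeSet (collAt 𝒬 (flp x i)) (flp x i) := by
        rcases hxjB j hne with h1 | h1
        · exact h1
        · exact absurd rfl h1.2
      rw [hCcube (flp x i)]
      exact mem_cube_flp.2 hjFQ
    have hcomm : IsCommutative' (Fnet 𝒬) := by
      intro i j
      by_cases hij : i = j
      · subst hij; rfl
      · funext x
        show upd (Fnet 𝒬) {j} (upd (Fnet 𝒬) {i} x) = upd (Fnet 𝒬) {i} (upd (Fnet 𝒬) {j} x)
        by_cases ha : flp x i ∈ collAt 𝒬 x <;> by_cases hb : flp x j ∈ collAt 𝒬 x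
        · rw [hupd_pos x i ha, hupd_pos x j hb,
            hupd_pos _ _ (hclaim x i j hij ha hb),
            hupd_pos _ _ (hclaim x j i (Ne.symm hij) hb ha)]
          exact flp_comm hij
        · have hnot : flp (flp x i) j ∉ collAt 𝒬 (flp x i) := by
            intro hmem
            have h1 : flp (flp x i) j ∈ collAt 𝒬 x := hCmono ha hmem
            have h2 : flp (flp x i) j j ≠ x j := by
              rw [flp_self, flp_ne (Ne.symm hij)]
              cases x j <;> simp
            have h3 : j ∈ freeSet (collAt 𝒬 x) x := ⟨_, h1, h2⟩
            exact hb ((hflipC x j).2 h3)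
          rw [hupd_pos x i ha, hupd_neg _ _ hnot, hupd_neg x j hb, hupd_pos x i ha]
        · have hnot : flp (flp x j) i ∉ collAt 𝒬 (flp x j) := by
            intro hmem
            have h1 : flp (flp x j) i ∈ collAt 𝒬 x := hCmono hb hmem
            have h2 : flp (flp x j) i i ≠ x i := by
              rw [flp_self, flp_ne hij]
              cases x i <;> simp
            have h3 : i ∈ freeSet (collAt 𝒬 x) x := ⟨_, h1, h2⟩
            exact ha ((hflipC x i).2 h3)
          rw [hupd_neg x i ha, hupd_pos x j hb, hupd_neg _ _ hnot]
        · rw [hupd_neg x i ha, hupd_neg x j hb, hupd_neg x i ha]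
    have hDs : ∀ x, Ds (Fnet 𝒬) x = freeSet (collAt 𝒬 x) x := by
      intro x
      ext i
      by_cases hi : i ∈ freeSet (collAt 𝒬 x) x
      · have hv := hFpos x i hi
        simp only [Ds, Set.mem_setOf_eq, hv]
        constructor
        · intro _; exact hi
        · intro _; cases x i <;> simp
      · have hv := hFneg x i hi
        simp only [Ds, Set.mem_setOf_eq, hv]
        simp [hi]
    have hT : ∀ x, Tprin (Fnet 𝒬) x = collAt 𝒬 x := by
      intro x
      rw [tprin_comm hcomm x, hDs x, ← hCcube x]
    refine ⟨Fnet 𝒬, hcomm, ?_⟩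
    ext X
    constructor
    · rintro ⟨x, rfl⟩
      rw [hT x]
      exact hCmem x
    · intro hX
      obtain ⟨x, rfl⟩ := (Set.ext_iff.1 hpp X).1 hX
      exact ⟨x, (hT x).symm⟩
end

section
/- For every Boolean network f of dimension n, the following are equivalent: (1) f is Marseille, i.e. f is commutative and bijective; (2) for all x ∈ 𝔹^n and all y ∈ [x, f(x)], [y, f(y)] = [x, f(x)]; (3) f^{(S,T)} = f^{(S Δ T)} for all S, T ⊆ [n]. -/
/-- Flip coordinate `i` of `x`. -/
def flp {n : ℕ} (x : Fin n → Bool) (i : Fin n) : Fin n → Bool :=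
  fun j => if j = i then !(x j) else x j

lemma key1 {n : ℕ} {f : (Fin n → Bool) → Fin n → Bool}
    (hc : IsCommutative' f) (hinj : Function.Injective f)
    {x : Fin n → Bool} {i : Fin n} (hi : x i ≠ f x i) :
    delta (flp x i) (f (flp x i)) = delta x (f x) := by
  have hfx : f x i = !(x i) := by cases h1 : x i <;> cases h2 : f x i <;> simp_all
  have hyx : upd f {i} x = flp x i := by
    funext j
    by_cases hj : j = i
    · subst hj; simp [upd, flp, hfx]
    · simp [upd, flp, hj]
  have hoff : ∀ j, j ≠ i → f (flp x i) j = f x j := by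
    intro j hj
    have h := congrFun (congrFun (hc i j) x) j
    simp only [upd2, Function.comp_apply] at h
    rw [hyx] at h
    simpa [upd, hj, Finset.mem_singleton] using h
  have hati : flp x i i ≠ f (flp x i) i := by
    intro h
    have hfeq : f (flp x i) = f x := by
      funext j
      by_cases hj : j = i
      · subst hj
        rw [← h, hfx]; simp [flp]
      · exact hoff j hj
    have := hinj hfeq
    have : flp x i i = x i := by rw [this]
    simp [flp] at this
  ext j
  by_cases hj : j = i
  · subst hj
    simp only [delta, Set.mem_setOf_eq]
    exact iff_of_true hati hi
  · simp only [delta, Set.mem_setOf_eq, hoff j hj]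
    simp [flp, hj]

lemma key2 {n : ℕ} {f : (Fin n → Bool) → Fin n → Bool}
    (hc : IsCommutative' f) (hinj : Function.Injective f)
    (A : Finset (Fin n)) :
    ∀ x y : Fin n → Bool, (∀ j, x j ≠ y j → j ∈ A) → (∀ j ∈ A, x j ≠ f x j) →
      delta y (f y) = delta x (f x) := by
  induction A using Finset.induction_on with
  | empty =>
    intro x y h1 _
    have : y = x := by
      funext j
      by_contra hj
      exact absurd (h1 j (Ne.symm hj)) (Finset.notMem_empty j)
    rw [this]
  | @insert a s ha IH =>
    intro x y h1 h2
    by_cases hxy : x a = y a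
    · refine IH x y (fun j hj => ?_) (fun j hj => h2 j (Finset.mem_insert_of_mem hj))
      rcases Finset.mem_insert.1 (h1 j hj) with h | h
      · exact absurd hxy (h ▸ hj)
      · exact h
    · have ha' : x a ≠ f x a := h2 a (Finset.mem_insert_self a s)
      have hD := key1 hc hinj ha'
      have hy : ∀ j, flp x a j ≠ y j → j ∈ s := by
        intro j hj
        by_cases hji : j = a
        · subst hji
          exfalso
          apply hj
          simp only [flp, if_pos rfl]
          cases h1 : x j <;> cases h2 : y j <;> simp_all
        · simp only [flp, if_neg hji] at hj
          rcases Finset.mem_insert.1 (h1 j hj) with h | h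
          · exact absurd h hji
          · exact h
      have h2' : ∀ j ∈ s, flp x a j ≠ f (flp x a) j := by
        intro j hj
        have hmem : j ∈ delta x (f x) := h2 j (Finset.mem_insert_of_mem hj)
        rw [← hD] at hmem
        exact hmem
      calc delta y (f y) = delta (flp x a) (f (flp x a)) := IH (flp x a) y hy h2'
        _ = delta x (f x) := hD

/-- alternate definitions of Marseille networks. -/
theorem stmt14 (n : ℕ) (f : (Fin n → Bool) → Fin n → Bool) :
    List.TFAE [
      IsCommutative' f ∧ Function.Bijective f,
      ∀ x : Fin n → Bool, ∀ y ∈ interval x (f x), interval y (f y) = interval x (f x),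
      ∀ S T : Finset (Fin n), upd2 f S T = upd f (symmDiff S T)
    ] := by
  tfae_have 1 → 2 := by
    rintro ⟨hc, hbij⟩ x y hy
    have hy' : delta x y ⊆ delta x (f x) := hy
    have hD : delta y (f y) = delta x (f x) := by
      classical
      refine key2 hc hbij.injective (Finset.univ.filter (fun j => x j ≠ f x j)) x y ?_ ?_
      · intro j hj
        simp only [Finset.mem_filter, Finset.mem_univ, true_and]
        exact hy' hj
      · intro j hj
        exact (Finset.mem_filter.1 hj).2
    ext z
    simp only [interval, Set.mem_setOf_eq, hD]
    constructor
    · intro h j hj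
      by_cases hjD : j ∈ delta x (f x)
      · exact hjD
      · exfalso
        have hxy : x j = y j := by
          by_contra hc'
          exact hjD (hy' hc')
        apply hjD
        apply h
        show y j ≠ z j
        rw [← hxy]
        exact hj
    · intro h j hj
      by_cases hjD : j ∈ delta x (f x)
      · exact hjD
      · exfalso
        have hxy : x j = y j := by
          by_contra hc'
          exact hjD (hy' hc')
        apply hjD
        apply h
        show x j ≠ z j
        rw [hxy]
        exact hj
  tfae_have 2 → 3 := by
    intro h2 S T
    have h2' : ∀ x y : Fin n → Bool, delta x y ⊆ delta x (f x) →
        delta y (f y) = delta x (f x) := by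
      intro x y hy
      have hI := h2 x y hy
      ext i
      constructor
      · intro hi
        have hz : flp y i ∈ interval y (f y) := by
          intro j hj
          by_cases hji : j = i
          · exact hji ▸ hi
          · exfalso; apply hj; show y j = flp y i j; simp [flp, hji]
        rw [hI] at hz
        by_cases hxi : x i = y i
        · apply hz
          show x i ≠ flp y i i
          rw [hxi]
          simp [flp]
        · exact hy hxi
      · intro hi
        have hz : flp y i ∈ interval x (f x) := by
          intro j hj
          by_cases hji : j = i
          · exact hji ▸ hi
          · have hfl : flp y i j = y j := by simp [flp, hji]
            have hj' : x j ≠ y j := by rw [← hfl]; exact hj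
            exact hy hj'
        rw [← hI] at hz
        apply hz
        show y i ≠ flp y i i
        simp [flp]
    funext x
    have hsub : delta x (upd f S x) ⊆ delta x (f x) := by
      intro j hj
      have hj' : x j ≠ upd f S x j := hj
      by_cases hjS : j ∈ S
      · show x j ≠ f x j
        simpa [upd, hjS] using hj'
      · exfalso; apply hj'; simp [upd, hjS]
    have hD := h2' x (upd f S x) hsub
    funext i
    have hDi : (upd f S x i ≠ f (upd f S x) i) ↔ (x i ≠ f x i) := by
      have := Set.ext_iff.1 hD i
      simpa [delta] using this
    show upd f T (upd f S x) i = upd f (symmDiff S T) x i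
    simp only [upd, Finset.mem_symmDiff] at hDi ⊢
    by_cases hS : i ∈ S <;> by_cases hT : i ∈ T <;>
      simp only [hS, hT, if_true, if_false, not_true, not_false_iff, and_true, and_false,
        true_and, false_and, or_false, false_or, if_pos, if_neg] at hDi ⊢ <;>
    · revert hDi
      cases hb : f (fun j => if j ∈ S then f x j else x j) i <;>
        cases hx : x i <;> cases hf : f x i <;> simp_all
  tfae_have 3 → 1 := by
    intro h3
    constructor
    · intro i j
      rw [h3, h3, symmDiff_comm]
    · have huniv : upd f Finset.univ = f := by
        funext x i; simp [upd]
      have hinv : Function.Involutive f := by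
        intro x
        calc f (f x) = upd2 f Finset.univ Finset.univ x := by
              simp [upd2, huniv]
          _ = upd f (symmDiff Finset.univ Finset.univ) x := by rw [h3]
          _ = x := by funext i; simp [upd, symmDiff_self]
      exact hinv.bijective
  tfae_finish
end

section
/- For every Boolean network f of dimension n, the following are equivalent: (1) f is Marseille, i.e. f is commutative and bijective; (2) f is globally involutive, i.e. f^{(S)} ∘ f^{(S)} = id for all S ⊆ [n]; (3) the general asynchronous graph GA(f) is symmetric. -/
section Aux

variable {n : ℕ} {f : (Fin n → Bool) → Fin n → Bool}

private lemma bres {a b : Bool} (h : a ≠ b) : a = !b := by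
  revert h; cases a <;> cases b <;> decide

private lemma upd_mem {S : Finset (Fin n)} {x : Fin n → Bool} {i : Fin n}
    (hi : i ∈ S) : upd f S x i = f x i := if_pos hi

private lemma upd_nmem {S : Finset (Fin n)} {x : Fin n → Bool} {i : Fin n}
    (hi : i ∉ S) : upd f S x i = x i := if_neg hi

private lemma upd_empty (x : Fin n → Bool) : upd f ∅ x = x :=
  funext fun k => if_neg (by simp)

private lemma ga_of {x y : Fin n → Bool} (h : ∀ i, x i ≠ y i → f x i = y i) :
    GA f x y := by
  refine ⟨Finset.univ.filter (fun i => x i ≠ y i), ?_⟩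
  funext i
  by_cases hxy : x i = y i
  · rw [upd_nmem (by simp [hxy])]; exact hxy.symm
  · rw [upd_mem (by simp [hxy])]; exact (h i hxy).symm

private lemma ga_ne {x y : Fin n → Bool} (hxy : GA f x y) (i : Fin n)
    (h : x i ≠ y i) : f x i = y i := by
  obtain ⟨S, rfl⟩ := hxy
  by_cases hi : i ∈ S
  · rw [upd_mem hi]
  · rw [upd_nmem hi] at h; exact absurd rfl h

private lemma lemL (hs : Symmetric (GA f)) {x y : Fin n → Bool} (hxy : GA f x y)
    {j : Fin n} (h : f x j ≠ x j) : f y j ≠ y j := by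
  by_cases hj : x j = y j
  · set z := Function.update y j (f x j) with hz
    have hzj : z j = f x j := by simp [hz]
    have hxz : GA f x z := by
      apply ga_of
      intro i hi
      by_cases hij : i = j
      · subst hij; exact hzj.symm
      · have : z i = y i := by simp [hz, Function.update_of_ne hij]
        rw [this] at hi ⊢
        exact ga_ne hxy i hi
    have h1 : f z j = x j := by
      apply ga_ne (hs hxz) j
      rw [hzj]; exact h
    have hzy : GA f z y := by
      apply ga_of
      intro i hi
      by_cases hij : i = j
      · subst hij; rw [h1, hj]
      · exact absurd (by simp [hz, Function.update_of_ne hij]) hi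
    have h2 : f y j = z j := by
      apply ga_ne (hs hzy) j
      rw [hzj, ← hj]; exact fun he => h he.symm
    rw [h2, hzj, ← hj]; exact h
  · have heq := ga_ne (hs hxy) j (fun he => hj he.symm)
    rw [heq]; exact hj

private lemma sym_to_inv (hs : Symmetric (GA f)) (S : Finset (Fin n)) :
    upd f S ∘ upd f S = id := by
  funext x i
  show upd f S (upd f S x) i = x i
  by_cases hi : i ∈ S
  · have hxy : GA f x (upd f S x) := ⟨S, rfl⟩
    set y := upd f S x with hy
    rw [upd_mem hi]
    by_cases hfx : f x i = x i
    · have hyi : y i = x i := by rw [hy, upd_mem hi, hfx]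
      by_cases hfy : f y i = y i
      · rw [hfy, hyi]
      · exact absurd (lemL hs (hs hxy) hfy) (by rw [hfx]; simp)
    · have hyi : y i = f x i := by rw [hy, upd_mem hi]
      have hfy : f y i ≠ y i := lemL hs hxy hfx
      rw [bres hfy, hyi, bres hfx, Bool.not_not]
  · rw [upd_nmem hi, upd_nmem hi]

private lemma key_of_sym (hs : Symmetric (GA f)) (i j : Fin n) (hji : j ≠ i)
    (x : Fin n → Bool) : f (upd f {i} x) j = f x j := by
  have hxy : GA f x (upd f {i} x) := ⟨{i}, rfl⟩
  set y := upd f {i} x with hy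
  have hyj : y j = x j := by rw [hy, upd_nmem (by simp [hji])]
  by_cases hfx : f x j = x j
  · by_cases hfy : f y j = y j
    · rw [hfy, hyj, hfx]
    · exact absurd (lemL hs (hs hxy) hfy) (by rw [hfx]; simp)
  · have hfy : f y j ≠ y j := lemL hs hxy hfx
    rw [bres hfy, hyj, bres hfx]

private lemma comm_of_sym (hs : Symmetric (GA f)) : IsCommutative' f := by
  intro i j
  by_cases hij : i = j
  · subst hij; rfl
  · funext x k
    show upd f {j} (upd f {i} x) k = upd f {i} (upd f {j} x) k
    by_cases hkj : k = j
    · subst hkj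
      have hki : k ≠ i := fun h => hij h.symm
      rw [upd_mem (by simp), upd_nmem (by simp [hki]), upd_mem (by simp),
        key_of_sym hs i k hki x]
    · by_cases hki : k = i
      · subst hki
        rw [upd_nmem (by simp [hkj]), upd_mem (by simp), upd_mem (by simp),
          key_of_sym hs j k hkj x]
      · rw [upd_nmem (by simp [hkj]), upd_nmem (by simp [hki]),
          upd_nmem (by simp [hki]), upd_nmem (by simp [hkj])]

private lemma keyK (hc : IsCommutative' f) (i j : Fin n) (hji : j ≠ i)
    (x : Fin n → Bool) : f (upd f {i} x) j = f x j := by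
  have h := congrFun (congrFun (hc i j) x) j
  simp only [upd2, Function.comp_apply] at h
  rw [upd_mem (by simp), upd_nmem (by simp [hji]), upd_mem (by simp)] at h
  exact h

private lemma Kbig (hc : IsCommutative' f) (S : Finset (Fin n)) :
    ∀ (x : Fin n → Bool) (j : Fin n), j ∉ S → f (upd f S x) j = f x j := by
  induction S using Finset.induction_on with
  | empty => intro x j _; rw [upd_empty]
  | @insert i S hiS ih =>
      have hdec : ∀ x : Fin n → Bool, upd f (insert i S) x = upd f {i} (upd f S x) := by
        intro x; funext k
        by_cases hk : k = i
        · subst hk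
          rw [upd_mem (by simp), upd_mem (by simp), ih x k hiS]
        · by_cases hkS : k ∈ S
          · rw [upd_mem (by simp [hkS]), upd_nmem (by simp [hk]), upd_mem hkS]
          · rw [upd_nmem (by simp [hk, hkS]), upd_nmem (by simp [hk]), upd_nmem hkS]
      intro x j hj
      simp only [Finset.mem_insert, not_or] at hj
      rw [hdec, keyK hc i j hj.1, ih x j hj.2]

private lemma decomp (hc : IsCommutative' f) (i : Fin n) (S : Finset (Fin n))
    (hiS : i ∉ S) (x : Fin n → Bool) :
    upd f (insert i S) x = upd f {i} (upd f S x) := by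
  funext k
  by_cases hk : k = i
  · subst hk
    rw [upd_mem (by simp), upd_mem (by simp), Kbig hc S x k hiS]
  · by_cases hkS : k ∈ S
    · rw [upd_mem (by simp [hkS]), upd_nmem (by simp [hk]), upd_mem hkS]
    · rw [upd_nmem (by simp [hk, hkS]), upd_nmem (by simp [hk]), upd_nmem hkS]

private lemma commS (hc : IsCommutative' f) (S : Finset (Fin n)) (i : Fin n)
    (x : Fin n → Bool) : upd f S (upd f {i} x) = upd f {i} (upd f S x) := by
  induction S using Finset.induction_on with
  | empty => rw [upd_empty, upd_empty]
  | @insert a S haS ih =>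
      rw [decomp hc a S haS, decomp hc a S haS, ih,
        show upd f {a} (upd f {i} (upd f S x)) = upd f {i} (upd f {a} (upd f S x)) from
          congrFun (hc i a) (upd f S x)]

private lemma inv1 (hc : IsCommutative' f) (hb : Function.Injective f)
    (i : Fin n) (x : Fin n → Bool) : upd f {i} (upd f {i} x) = x := by
  by_cases hfx : f x i = x i
  · have hx : upd f {i} x = x := by
      funext k; by_cases hk : k = i
      · subst hk; rw [upd_mem (by simp), hfx]
      · rw [upd_nmem (by simp [hk])]
    rw [hx, hx]
  · set y := upd f {i} x with hy
    have hyi : y i = f x i := by rw [hy, upd_mem (by simp)]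
    by_cases hfy : f y i = y i
    · exfalso
      have hfeq : f y = f x := by
        funext j
        by_cases hj : j = i
        · subst hj; rw [hfy, hyi]
        · exact keyK hc i j hj x
      have hyx : y = x := hb hfeq
      rw [hyx] at hyi
      exact hfx hyi.symm
    · funext k
      by_cases hk : k = i
      · subst hk
        rw [upd_mem (by simp), bres hfy, hyi, bres hfx, Bool.not_not]
      · rw [upd_nmem (by simp [hk]), hy, upd_nmem (by simp [hk])]

private lemma invS (hc : IsCommutative' f) (hb : Function.Injective f)
    (S : Finset (Fin n)) (x : Fin n → Bool) : upd f S (upd f S x) = x := by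
  induction S using Finset.induction_on generalizing x with
  | empty => rw [upd_empty, upd_empty]
  | @insert a S haS ih =>
      rw [decomp hc a S haS, decomp hc a S haS, commS hc S a, ih, inv1 hc hb]

end Aux

/-- Marseille ↔ globally involutive ↔ symmetric general asynchronous
graph. -/
theorem stmt15 (n : ℕ) (f : (Fin n → Bool) → Fin n → Bool) :
    List.TFAE [
      IsCommutative' f ∧ Function.Bijective f,
      ∀ S : Finset (Fin n), upd f S ∘ upd f S = id,
      Symmetric (GA f)
    ] := by
  tfae_have 1 → 2 := by
    rintro ⟨hc, hb⟩ S
    funext x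
    exact invS hc hb.injective S x
  tfae_have 2 → 3 := by
    intro h2 x y hxy
    obtain ⟨S, rfl⟩ := hxy
    exact ⟨S, (congrFun (h2 S) x).symm⟩
  tfae_have 3 → 1 := by
    intro h3
    refine ⟨comm_of_sym h3, ?_⟩
    have hinv : Function.Involutive f := by
      intro x
      have h := congrFun (sym_to_inv h3 Finset.univ) x
      have huniv : ∀ z : Fin n → Bool, upd f Finset.univ z = f z := by
        intro z; funext k; simp [upd]
      rw [Function.comp_apply, huniv, huniv] at h
      exact h
    exact hinv.bijective
  tfae_finish
end

section
/- For every Boolean network f of dimension n, the following are equivalent: (1) f is locally bijective, i.e. f^{(i)} is a bijection of 𝔹^n for every i ∈ [n]; (2) f is locally involutive, i.e. f^{(i)} ∘ f^{(i)} = id for every i ∈ [n]; (3) the asynchronous graph A(f) is symmetric. Moreover, if f is trapping and A(f) is symmetric, then f is Marseille (commutative and bijective). -/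
section Aux16

variable {n : ℕ} (f : (Fin n → Bool) → Fin n → Bool)

private lemma bool3aux : ∀ a b c : Bool, a ≠ c → b ≠ c → a = b := by decide

private lemma bool2aux : ∀ a b : Bool, a ≠ b → a = !b := by decide

lemma upd_single_apply (i : Fin n) (x : Fin n → Bool) (k : Fin n) :
    upd f {i} x k = if k = i then f x k else x k := by
  simp [upd]

lemma invol_of_sym (hs : Symmetric (Agraph f)) :
    ∀ (i : Fin n) (x : Fin n → Bool), upd f {i} (upd f {i} x) = x := by
  intro i x
  obtain ⟨j, hj⟩ := hs (x := x) (y := upd f {i} x) ⟨i, rfl⟩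
  by_cases h : upd f {i} x = x
  · rw [h, h]
  · have hne : upd f {i} x i ≠ x i := by
      intro he
      apply h
      funext k
      rw [upd_single_apply]
      split
      · next hk =>
          subst hk
          simpa [upd] using he
      · rfl
    have hji : j = i := by
      by_contra hji
      have h2 := congrFun hj i
      rw [upd_single_apply] at h2
      rw [if_neg (fun hh => hji hh.symm)] at h2
      exact hne h2.symm
    subst hji
    exact hj.symm

lemma invol_of_bij (hb : ∀ i : Fin n, Function.Bijective (upd f {i})) :
    ∀ (i : Fin n) (x : Fin n → Bool), upd f {i} (upd f {i} x) = x := by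
  intro i x
  by_cases h : f x i = x i
  · have hx : upd f {i} x = x := by
      funext k
      rw [upd_single_apply]
      split
      · next hk => subst hk; exact h
      · rfl
    rw [hx, hx]
  · by_cases h2 : f (upd f {i} x) i = upd f {i} x i
    · exfalso
      have hgg : upd f {i} (upd f {i} x) = upd f {i} x := by
        funext k
        rw [upd_single_apply]
        split
        · next hk => subst hk; exact h2
        · rfl
      have hx := (hb i).injective hgg
      have := congrFun hx i
      rw [upd_single_apply, if_pos rfl] at this
      exact h this
    · funext k
      rw [upd_single_apply]
      split
      · next hk =>
          subst hk
          have h1 : f x k = !(x k) := bool2aux _ _ h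
          have hgi : upd f {k} x k = f x k := by
            rw [upd_single_apply, if_pos rfl]
          have h2' : f (upd f {k} x) k = !(upd f {k} x k) := bool2aux _ _ h2
          rw [h2', hgi, h1, Bool.not_not]
      · next hk =>
          rw [upd_single_apply, if_neg hk]

/-- The trapping lemma: if `Δ(x,y) ⊆ Δ(x,f x)` then `Δ(y,f y) ⊆ Δ(x,f x)`. -/
lemma trapT (ht : IsTrapping f) (x y : Fin n → Bool)
    (hxy : ∀ k, x k ≠ y k → x k ≠ f x k) :
    ∀ k, y k ≠ f y k → x k ≠ f x k := by
  classical
  have hGA : GA f x y := by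
    refine ⟨Finset.univ.filter (fun k => x k ≠ y k), ?_⟩
    funext k
    simp only [upd, Finset.mem_filter, Finset.mem_univ, true_and]
    by_cases hk : x k = y k
    · simp [hk]
    · rw [if_pos hk]
      exact bool3aux _ _ _ (Ne.symm hk) (Ne.symm (hxy k hk))
  intro k hk
  by_contra hc
  obtain ⟨T, hT⟩ := ht hGA ⟨{k}, rfl⟩
  have h1 := congrFun hT k
  rw [upd_single_apply, if_pos rfl] at h1
  have h2 : upd f T x k = x k := by
    simp only [upd]
    split
    · exact hc.symm
    · rfl
  rw [h2] at h1
  exact (hxy k fun he => hk (he ▸ h1).symm) hc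

/-- Key lemma: for a trapping locally involutive network, updating `j` does not
change the value of `f` in coordinate `i ≠ j`. -/
lemma keyP (ht : IsTrapping f)
    (hI : ∀ (i : Fin n) (x : Fin n → Bool), upd f {i} (upd f {i} x) = x)
    {i j : Fin n} (hij : i ≠ j) (x : Fin n → Bool) :
    f (upd f {j} x) i = f x i := by
  by_cases hj : f x j = x j
  · have hzx : upd f {j} x = x := by
      funext k
      rw [upd_single_apply]
      split
      · next hk => subst hk; exact hj
      · rfl
    rw [hzx]
  · have hzj : upd f {j} x j = f x j := by rw [upd_single_apply, if_pos rfl]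
    have hzk : ∀ k, k ≠ j → upd f {j} x k = x k := fun k hk => by
      rw [upd_single_apply, if_neg hk]
    by_cases hi : f x i = x i
    · have hT := trapT f ht x (upd f {j} x) ?_
      · have hzi : f (upd f {j} x) i = upd f {j} x i := by
          by_contra hne
          exact (hT i (Ne.symm hne)) hi.symm
        rw [hzi, hzk i hij, hi]
      · intro k hk
        have hkj : k = j := by
          by_contra h'
          exact hk (hzk k h').symm
        subst hkj
        exact Ne.symm hj
    · by_contra hc
      have hfxi : f x i = !(x i) := bool2aux _ _ hi
      have hzi : upd f {j} x i = x i := hzk i hij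
      have hfzi : f (upd f {j} x) i = upd f {j} x i := by
        have h3 := bool2aux _ _ hc
        rw [h3, hfxi, Bool.not_not, ← hzi]
      have hfzj : f (upd f {j} x) j = x j := by
        have h4 := congrFun (hI j x) j
        rw [upd_single_apply, if_pos rfl] at h4
        exact h4
      have hT := trapT f ht (upd f {j} x) x ?_
      · exact (hT i (Ne.symm hi)) hfzi.symm
      · intro k hk
        have hkj : k = j := by
          by_contra h'
          exact hk (hzk k h')
        subst hkj
        rw [hzj, hfzj]
        exact hj

lemma foldl_eq_upd (ht : IsTrapping f)
    (hI : ∀ (i : Fin n) (x : Fin n → Bool), upd f {i} (upd f {i} x) = x) :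
    ∀ (l : List (Fin n)), l.Nodup → ∀ x,
      List.foldl (fun y j => upd f {j} y) x l = upd f l.toFinset x := by
  intro l
  induction l with
  | nil =>
      intro _ x
      funext k
      simp [upd]
  | cons a l ih =>
      intro hnd x
      have ha : a ∉ l := (List.nodup_cons.mp hnd).1
      have hnd' := (List.nodup_cons.mp hnd).2
      show List.foldl (fun y j => upd f {j} y) (upd f {a} x) l = _
      rw [ih hnd']
      funext k
      by_cases hk : k ∈ l.toFinset
      · have hka : k ≠ a := fun he => ha (he ▸ (List.mem_toFinset.mp hk))
        have hL : upd f l.toFinset (upd f {a} x) k = f (upd f {a} x) k := by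
          simp [upd, hk]
        have hR : upd f (a :: l).toFinset x k = f x k := by
          simp [upd, hk]
        rw [hL, hR]
        exact keyP f ht hI hka x
      · by_cases hka : k = a
        · subst hka
          simp [upd, hk]
        · simp [upd, hk, hka]

lemma foldl_bij (hb : ∀ i : Fin n, Function.Bijective (upd f {i})) :
    ∀ l : List (Fin n),
      Function.Bijective (fun x => List.foldl (fun y j => upd f {j} y) x l) := by
  intro l
  induction l with
  | nil => exact Function.bijective_id
  | cons a l ih =>
      have heq : (fun x => List.foldl (fun y j => upd f {j} y) x (a :: l)) =
          (fun x => List.foldl (fun y j => upd f {j} y) x l) ∘ (upd f {a}) := rfl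
      rw [heq]
      exact ih.comp (hb a)

end Aux16

/-- locally bijective ↔ locally involutive ↔ symmetric asynchronous
graph; and a trapping network with symmetric asynchronous graph is Marseille. -/
theorem stmt16 (n : ℕ) (f : (Fin n → Bool) → Fin n → Bool) :
    List.TFAE [
      ∀ i : Fin n, Function.Bijective (upd f {i}),
      ∀ i : Fin n, upd f {i} ∘ upd f {i} = id,
      Symmetric (Agraph f)
    ] ∧
    (IsTrapping f → Symmetric (Agraph f) →
      IsCommutative' f ∧ Function.Bijective f) := by
  constructor
  · tfae_have 1 → 2 := fun h i => funext fun x => invol_of_bij f h i x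
    tfae_have 2 → 1 := fun h i =>
      Function.Involutive.bijective (fun x => congrFun (h i) x)
    tfae_have 2 → 3 := by
      intro h x y hxy
      obtain ⟨i, hi⟩ := hxy
      exact ⟨i, by rw [hi]; exact (congrFun (h i) x).symm⟩
    tfae_have 3 → 2 := fun h i => funext fun x => invol_of_sym f h i x
    tfae_finish
  · intro ht hsym
    have hI := invol_of_sym f hsym
    have hb : ∀ i : Fin n, Function.Bijective (upd f {i}) :=
      fun i => Function.Involutive.bijective (fun x => hI i x)
    constructor
    · intro i j
      by_cases hij : i = j
      · subst hij; rfl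
      · funext x k
        show upd f {j} (upd f {i} x) k = upd f {i} (upd f {j} x) k
        by_cases hkj : k = j
        · subst hkj
          rw [upd_single_apply, if_pos rfl, upd_single_apply,
            if_neg (fun hh : k = i => hij hh.symm), upd_single_apply, if_pos rfl]
          exact keyP f ht hI (fun hh => hij hh.symm) x
        · by_cases hki : k = i
          · subst hki
            rw [upd_single_apply, if_neg hkj, upd_single_apply, if_pos rfl,
              upd_single_apply, if_pos rfl]
            exact (keyP f ht hI hij x).symm
          · rw [upd_single_apply, if_neg hkj, upd_single_apply, if_neg hki,
              upd_single_apply, if_neg hki, upd_single_apply, if_neg hkj]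
    · have hfeq : f = fun x =>
          List.foldl (fun y j => upd f {j} y) x (List.finRange n) := by
        funext x
        rw [foldl_eq_upd f ht hI _ (List.nodup_finRange n)]
        funext k
        simp [upd, List.mem_toFinset, List.mem_finRange]
      rw [hfeq]
      exact foldl_bij f hb _
end

section
/- Let f be a trapping Boolean network of dimension n. Then f^{n+2} = f^n (iterating f), and every periodic point of f has period at most 2 (if f^k(x) = x for some k ≥ 1 then f^2(x) = x). Moreover, if f is additionally bijective, then f is involutive, i.e. f ∘ f = id. -/
lemma mem_delta {n : ℕ} {x y : Fin n → Bool} {i : Fin n} :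
    i ∈ delta x y ↔ x i ≠ y i := Iff.rfl

lemma bool3 {a b c : Bool} (h1 : a ≠ b) (h2 : a ≠ c) : b = c := by
  cases a <;> cases b <;> cases c <;> simp_all

lemma GA_iff {n : ℕ} (f : (Fin n → Bool) → Fin n → Bool) (x y : Fin n → Bool) :
    GA f x y ↔ delta x y ⊆ delta x (f x) := by
  constructor
  · rintro ⟨S, rfl⟩ i hi
    simp only [mem_delta, upd] at hi ⊢
    by_cases h : i ∈ S
    · simpa [h] using hi
    · simp [h] at hi
  · intro h
    classical
    refine ⟨Finset.univ.filter (fun i => x i ≠ y i), ?_⟩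
    funext i
    simp only [upd, Finset.mem_filter, Finset.mem_univ, true_and]
    by_cases hxy : x i = y i
    · simp [hxy]
    · have hfx : x i ≠ f x i := h hxy
      simp only [hxy, if_pos, ne_eq, not_false_eq_true, if_true]
      exact bool3 hxy hfx

lemma trap_step {n : ℕ} {f : (Fin n → Bool) → Fin n → Bool} (hf : IsTrapping f)
    (a z : Fin n → Bool) (h : delta (f a) z ⊆ delta (f a) (f (f a))) :
    delta a z ⊆ delta a (f a) := by
  have h1 : GA f a (f a) := ⟨Finset.univ, by funext i; simp [upd]⟩
  have h2 : GA f (f a) z := (GA_iff f (f a) z).2 h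
  exact (GA_iff f a z).1 (hf h1 h2)

lemma delta_nested {n : ℕ} {f : (Fin n → Bool) → Fin n → Bool} (hf : IsTrapping f)
    (a : Fin n → Bool) : delta (f a) (f (f a)) ⊆ delta a (f a) := by
  intro i hi
  classical
  set z : Fin n → Bool := fun j => if j = i then !(f a j) else f a j with hz
  have hzsub : delta (f a) z ⊆ delta (f a) (f (f a)) := by
    intro j hj
    simp only [mem_delta, hz] at hj
    by_cases h : j = i
    · subst h; exact hi
    · simp [h] at hj
  have h2 := trap_step hf a z hzsub
  by_contra hab
  simp only [mem_delta, not_not] at hab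
  have hmem : i ∈ delta a z := by
    simp [mem_delta, hz, hab]
  exact (h2 hmem) hab

lemma period2 {n : ℕ} {f : (Fin n → Bool) → Fin n → Bool} (hf : IsTrapping f)
    (a : Fin n → Bool) (h : hdist (f a) (f (f a)) = hdist a (f a)) : f (f a) = a := by
  have hsub := delta_nested hf a
  have heq : delta (f a) (f (f a)) = delta a (f a) :=
    Set.eq_of_subset_of_ncard_le hsub (le_of_eq h.symm) (Set.toFinite _)
  funext i
  by_cases hi : a i = f a i
  · have hi2 : i ∉ delta (f a) (f (f a)) := by
      rw [heq]; simp [mem_delta, hi]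
    simp only [mem_delta, not_not] at hi2
    exact hi2.symm.trans hi.symm
  · have hi2 : i ∈ delta (f a) (f (f a)) := by
      rw [heq]; exact hi
    exact bool3 hi2 (Ne.symm hi)

/-- a trapping network satisfies `f^{n+2} = f^n`, its periodic points
have period at most 2, and if moreover it is bijective then it is involutive. -/
theorem stmt17 (n : ℕ) (f : (Fin n → Bool) → Fin n → Bool) (hf : IsTrapping f) :
    f^[n + 2] = f^[n] ∧
    (∀ (x : Fin n → Bool) (k : ℕ), 1 ≤ k → f^[k] x = x → f^[2] x = x) ∧
    (Function.Bijective f → f ∘ f = id) := by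
  have key : f^[n + 2] = f^[n] := by
    funext x
    set d : ℕ → ℕ := fun k => hdist (f^[k] x) (f^[k + 1] x) with hd
    have mono : ∀ k, d (k + 1) ≤ d k := by
      intro k
      apply Set.ncard_le_ncard _ (Set.toFinite _)
      have h := delta_nested hf (f^[k] x)
      simpa [Function.iterate_succ_apply'] using h
    have exk : ∃ k ≤ n, d (k + 1) = d k := by
      by_contra hc
      push_neg at hc
      have strict : ∀ k ≤ n, d (k + 1) < d k :=
        fun k hk => lt_of_le_of_ne (mono k) (hc k hk)
      have bound : ∀ k, k ≤ n + 1 → d k + k ≤ d 0 := by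
        intro k
        induction k with
        | zero => simp
        | succ m ih =>
          intro hk
          have h1 := strict m (by omega)
          have h2 := ih (by omega)
          omega
      have d0 : d 0 ≤ n :=
        le_trans (Set.ncard_le_ncard (Set.subset_univ _) (Set.toFinite _))
          (by simp [Set.ncard_univ])
      have := bound (n + 1) le_rfl
      omega
    obtain ⟨k, hk, hdk⟩ := exk
    have h2 : f^[k + 2] x = f^[k] x := by
      have hp := period2 hf (f^[k] x) ?_
      · simpa [Function.iterate_succ_apply'] using hp
      · simpa [hd, Function.iterate_succ_apply'] using hdk
    have prop : ∀ m, k ≤ m → f^[m + 2] x = f^[m] x := by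
      intro m hm
      induction m, hm using Nat.le_induction with
      | base => exact h2
      | succ m hm ih =>
        have e1 : f^[m + 1 + 2] x = f (f^[m + 2] x) := by
          rw [← Function.iterate_succ_apply' f (m + 2) x]
        rw [e1, ih, ← Function.iterate_succ_apply' f m x]
    exact prop n hk
  have key2 : ∀ m, n ≤ m → f^[m + 2] = f^[m] := by
    intro m hm
    rw [show m + 2 = (m - n) + (n + 2) by omega, Function.iterate_add, key,
      ← Function.iterate_add, show m - n + n = m by omega]
  refine ⟨key, ?_, ?_⟩
  · intro x k hk hkx
    have hmul : ∀ N, f^[k * N] x = x := by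
      intro N
      induction N with
      | zero => simp
      | succ N ih =>
        have : k * (N + 1) = k + k * N := by ring
        rw [this, Function.iterate_add_apply, ih, hkx]
    set m := k * (n + 1) with hm
    have hmn : n ≤ m := by
      have : n + 1 ≤ k * (n + 1) := Nat.le_mul_of_pos_left _ hk
      omega
    have e1 : f^[m + 2] x = f^[m] x := congrFun (key2 m hmn) x
    have e2 : f^[m + 2] x = f^[2] x := by
      rw [show m + 2 = 2 + m by omega, Function.iterate_add_apply, hmul (n + 1)]
    rw [← e2, e1, hmul (n + 1)]
  · intro hbij
    have hinj : Function.Injective f^[n] := (hbij.iterate n).injective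
    funext x
    have : f^[n] (f^[2] x) = f^[n] x := by
      rw [← Function.iterate_add_apply]
      exact congrFun (key2 n le_rfl) x ▸ congrFun key x
    have h2 : f^[2] x = x := hinj this
    simpa [Function.iterate_succ_apply] using h2
end
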